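/- Let d ≥ 1, let V and W be unitary operators on ℂ^d, let {χ_i}_{i=0}^{d-1} be an orthonormal basis of ℂ^d, and let ψ ∈ ℂ^d be a unit vector. Then the sum of the tester entropies satisfies H(V) + H(W) ≥ −log( max_{i,j} |⟨χ_i, W V* χ_j⟩|² ), where the maximum is over all pairs of indices i, j. -/

import Mathlib

open scoped ComplexInnerProductSpace Matrix

noncomputable section

/-- Action of a `d × d` complex matrix on a vector of `ℂ^d`. -/
def act {d : ℕ} (U : Matrix (Fin d) (Fin d) ℂ) (ψ : EuclideanSpace ℂ (Fin d)) :
    EuclideanSpace ℂ (Fin d) :=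
  Matrix.toEuclideanLin U ψ

/-- Tester entropy: Shannon entropy of the outcome distribution
`p i = |⟨χ i, U ψ⟩|²` (natural logarithm, with `0 log 0 = 0`). -/
def tEnt {d : ℕ} (χ : OrthonormalBasis (Fin d) ℂ (EuclideanSpace ℂ (Fin d)))
    (U : Matrix (Fin d) (Fin d) ℂ) (ψ : EuclideanSpace ℂ (Fin d)) : ℝ :=
  ∑ i, Real.negMulLog (‖⟪χ i, act U ψ⟫‖ ^ 2)

section MUProofs
open Finset
namespace MU

lemma cs_complex {d : ℕ} (x y : Fin d → ℂ) :
    ‖∑ j, x j * y j‖ ≤ Real.sqrt (∑ j, ‖x j‖ ^ 2) * Real.sqrt (∑ j, ‖y j‖ ^ 2) := by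
  calc ‖∑ j, x j * y j‖ ≤ ∑ j, ‖x j * y j‖ := norm_sum_le _ _
    _ = ∑ j, ‖x j‖ * ‖y j‖ := by simp [norm_mul]
    _ ≤ _ := Real.sum_mul_le_sqrt_mul_sqrt _ _ _

lemma mulVec_inner {d : ℕ} {M : Matrix (Fin d) (Fin d) ℂ}
    (hM : M ∈ Matrix.unitaryGroup (Fin d) ℂ) (x y : Fin d → ℂ) :
    star (M.mulVec x) ⬝ᵥ (M.mulVec y) = star x ⬝ᵥ y := by
  have h1 : Mᴴ * M = 1 := by
    have := hM.1
    rwa [Matrix.star_eq_conjTranspose] at this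
  rw [Matrix.star_mulVec, Matrix.dotProduct_mulVec, Matrix.vecMul_vecMul, h1,
    Matrix.vecMul_one]

lemma dot_self_re {d : ℕ} (w : Fin d → ℂ) :
    (star w ⬝ᵥ w).re = ∑ i, ‖w i‖ ^ 2 := by
  rw [dotProduct, Complex.re_sum]
  refine Finset.sum_congr rfl fun i _ => ?_
  rw [Pi.star_apply, RCLike.star_def, Complex.conj_mul']
  simp [← Complex.ofReal_pow]

lemma mulVec_normsq {d : ℕ} {M : Matrix (Fin d) (Fin d) ℂ}
    (hM : M ∈ Matrix.unitaryGroup (Fin d) ℂ) (x : Fin d → ℂ) :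
    ∑ j, ‖M.mulVec x j‖ ^ 2 = ∑ i, ‖x i‖ ^ 2 := by
  have h := congrArg Complex.re (mulVec_inner hM x x)
  rwa [dot_self_re, dot_self_re] at h



lemma core {d : ℕ} {M : Matrix (Fin d) (Fin d) ℂ}
    (hM2 : ∀ u : Fin d → ℂ, ∑ j, ‖M.mulVec u j‖ ^ 2 = ∑ i, ‖u i‖ ^ 2)
    {c : ℝ} (hc0 : 0 < c) (hc : ∀ i j, ‖M i j‖ ≤ c)
    {t : ℝ} (ht0 : 0 < t) (ht1 : t < 1)
    (a g : Fin d → ℂ)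
    (ha : ∑ i, ‖a i‖ ^ (2 / (1 + t)) = 1)
    (hg : ∑ j, ‖g j‖ ^ (2 / (1 + t)) = 1) :
    ‖∑ j, g j * M.mulVec a j‖ ≤ c ^ t := by
  classical
  have ht0' : (0:ℝ) < 1 + t := by linarith
  have hp0 : (0:ℝ) < 2 / (1 + t) := by positivity
  -- each base is at most 1
  have hle1 : ∀ (w : Fin d → ℂ), (∑ i, ‖w i‖ ^ (2 / (1 + t)) = 1) → ∀ i, ‖w i‖ ≤ 1 := by
    intro w hw i
    by_contra hgt
    push_neg at hgt
    have h1 : (1:ℝ) < ‖w i‖ ^ (2 / (1 + t)) := by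
      have := Real.rpow_lt_rpow (le_of_lt one_pos) hgt hp0
      rwa [Real.one_rpow] at this
    have h2 := Finset.single_le_sum (f := fun i => ‖w i‖ ^ (2 / (1 + t)))
        (fun _ _ => Real.rpow_nonneg (norm_nonneg _) _) (Finset.mem_univ i)
    rw [hw] at h2
    linarith
  -- the analytic family
  set E : ℂ → ℂ := fun z => (((1 + t)⁻¹ : ℝ) : ℂ) * (1 + z) with hE
  set u : Fin d → ℂ → ℂ := fun i z =>
    if a i = 0 then 0 else (‖a i‖ : ℂ) ^ (E z) * (a i * (‖a i‖ : ℂ)⁻¹) with hu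
  set v : Fin d → ℂ → ℂ := fun j z =>
    if g j = 0 then 0 else (‖g j‖ : ℂ) ^ (E z) * (g j * (‖g j‖ : ℂ)⁻¹) with hv
  set F : ℂ → ℂ := fun z => ∑ j, ∑ i, v j z * (M j i * u i z) with hF
  set G : ℂ → ℂ := fun z => F z * Complex.exp (((- Real.log c : ℝ) : ℂ) * z) with hG
  have hEre : ∀ z : ℂ, (E z).re = (1 + t)⁻¹ * (1 + z.re) := by
    intro z
    simp only [hE]
    rw [Complex.re_ofReal_mul, Complex.add_re, Complex.one_re]
  -- modulus of the building blocks
  have hmod : ∀ (w : ℂ) (z : ℂ), w ≠ 0 →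
      ‖(‖w‖ : ℂ) ^ (E z) * (w * (‖w‖ : ℂ)⁻¹)‖ = ‖w‖ ^ ((1 + t)⁻¹ * (1 + z.re)) := by
    intro w z hw
    have hw0 : (0:ℝ) < ‖w‖ := norm_pos_iff.mpr hw
    rw [norm_mul, norm_mul, norm_inv, Complex.norm_real, Real.norm_eq_abs, abs_of_pos hw0,
      Complex.norm_cpow_eq_rpow_re_of_pos hw0, hEre,
      mul_inv_cancel₀ (ne_of_gt hw0), mul_one]
  have humod : ∀ i z, ‖u i z‖ = ‖a i‖ ^ ((1 + t)⁻¹ * (1 + z.re)) ∨ (a i = 0 ∧ u i z = 0) := by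
    intro i z
    by_cases h : a i = 0
    · exact Or.inr ⟨h, by simp [hu, h]⟩
    · left; rw [hu]; simp only [h, if_neg, if_false]; exact hmod _ _ h
  have hvmod : ∀ j z, ‖v j z‖ = ‖g j‖ ^ ((1 + t)⁻¹ * (1 + z.re)) ∨ (g j = 0 ∧ v j z = 0) := by
    intro j z
    by_cases h : g j = 0
    · exact Or.inr ⟨h, by simp [hv, h]⟩
    · left; rw [hv]; simp only [h, if_neg, if_false]; exact hmod _ _ h
  -- squared moduli on the line re = 0
  have humod2 : ∀ i (z : ℂ), z.re = 0 → ‖u i z‖ ^ 2 = ‖a i‖ ^ (2 / (1 + t)) := by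
    intro i z hz
    rcases humod i z with h | ⟨h0, h⟩
    · rw [h, hz, ← Real.rpow_natCast (‖a i‖ ^ ((1 + t)⁻¹ * (1 + 0))) 2,
        ← Real.rpow_mul (norm_nonneg _)]
      congr 1
      push_cast
      ring
    · rw [h, h0]
      simp [Real.zero_rpow (ne_of_gt hp0)]
  have hvmod2 : ∀ j (z : ℂ), z.re = 0 → ‖v j z‖ ^ 2 = ‖g j‖ ^ (2 / (1 + t)) := by
    intro j z hz
    rcases hvmod j z with h | ⟨h0, h⟩
    · rw [h, hz, ← Real.rpow_natCast (‖g j‖ ^ ((1 + t)⁻¹ * (1 + 0))) 2,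
        ← Real.rpow_mul (norm_nonneg _)]
      congr 1
      push_cast
      ring
    · rw [h, h0]
      simp [Real.zero_rpow (ne_of_gt hp0)]
  -- moduli on the line re = 1
  have humod1 : ∀ i (z : ℂ), z.re = 1 → ‖u i z‖ = ‖a i‖ ^ (2 / (1 + t)) := by
    intro i z hz
    rcases humod i z with h | ⟨h0, h⟩
    · rw [h, hz]
      congr 1
      ring
    · rw [h, h0]
      simp [Real.zero_rpow (ne_of_gt hp0)]
  have hvmod1 : ∀ j (z : ℂ), z.re = 1 → ‖v j z‖ = ‖g j‖ ^ (2 / (1 + t)) := by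
    intro j z hz
    rcases hvmod j z with h | ⟨h0, h⟩
    · rw [h, hz]
      congr 1
      ring
    · rw [h, h0]
      simp [Real.zero_rpow (ne_of_gt hp0)]
  -- differentiability
  have hEd : Differentiable ℂ E := by
    simp only [hE]
    exact (differentiable_const _).mul ((differentiable_const 1).add differentiable_id)
  have hud : ∀ i, Differentiable ℂ (u i) := by
    intro i
    by_cases h : a i = 0
    · simp only [hu, h, if_true]
      exact differentiable_const 0
    · simp only [hu, h, if_false]
      exact (hEd.const_cpow
        (Or.inl (Complex.ofReal_ne_zero.mpr (norm_ne_zero_iff.mpr h)))).mul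
        (differentiable_const _)
  have hvd : ∀ j, Differentiable ℂ (v j) := by
    intro j
    by_cases h : g j = 0
    · simp only [hv, h, if_true]
      exact differentiable_const 0
    · simp only [hv, h, if_false]
      exact (hEd.const_cpow
        (Or.inl (Complex.ofReal_ne_zero.mpr (norm_ne_zero_iff.mpr h)))).mul
        (differentiable_const _)
  have hFd : Differentiable ℂ F := by
    simp only [hF]
    refine Differentiable.fun_sum fun j _ => Differentiable.fun_sum fun i _ => ?_
    exact (hvd j).mul ((differentiable_const (M j i)).mul (hud i))
  have hGd : Differentiable ℂ G := by
    simp only [hG]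
    exact hFd.mul ((differentiable_id.const_mul _).cexp)
  -- rewrite F using mulVec
  have hFz : ∀ z : ℂ, F z = ∑ j, v j z * M.mulVec (fun i => u i z) j := by
    intro z
    simp only [hF]
    refine Finset.sum_congr rfl fun j _ => ?_
    simp [Matrix.mulVec, dotProduct, Finset.mul_sum]
  -- bound on the line re = 0
  have hB0 : ∀ z : ℂ, z.re = 0 → ‖G z‖ ≤ 1 := by
    intro z hz
    have hexp : ‖Complex.exp (((- Real.log c : ℝ) : ℂ) * z)‖ = 1 := by
      rw [Complex.norm_exp, Complex.re_ofReal_mul, hz, mul_zero,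
        Real.exp_zero]
    have h1 : ∑ j, ‖v j z‖ ^ 2 = 1 := by
      rw [← hg]
      exact Finset.sum_congr rfl fun j _ => hvmod2 j z hz
    have h2 : ∑ j, ‖M.mulVec (fun i => u i z) j‖ ^ 2 = 1 := by
      rw [hM2]
      rw [← ha]
      exact Finset.sum_congr rfl fun i _ => humod2 i z hz
    have h3 : ‖F z‖ ≤ 1 := by
      rw [hFz z]
      calc ‖∑ j, v j z * M.mulVec (fun i => u i z) j‖
          ≤ Real.sqrt (∑ j, ‖v j z‖ ^ 2) * Real.sqrt (∑ j, ‖M.mulVec (fun i => u i z) j‖ ^ 2) :=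
            cs_complex _ _
        _ = 1 := by rw [h1, h2, Real.sqrt_one, mul_one]
    simp only [hG]
    rw [norm_mul, hexp, mul_one]
    exact h3
  -- bound on the line re = 1
  have hB1 : ∀ z : ℂ, z.re = 1 → ‖G z‖ ≤ 1 := by
    intro z hz
    have hexp : ‖Complex.exp (((- Real.log c : ℝ) : ℂ) * z)‖ = c⁻¹ := by
      rw [Complex.norm_exp, Complex.re_ofReal_mul, hz, mul_one,
        Real.exp_neg, Real.exp_log hc0]
    have h1 : ∑ j, ‖v j z‖ = 1 := by
      rw [← hg]
      exact Finset.sum_congr rfl fun j _ => hvmod1 j z hz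
    have h2 : ∑ i, ‖u i z‖ = 1 := by
      rw [← ha]
      exact Finset.sum_congr rfl fun i _ => humod1 i z hz
    have h3 : ‖F z‖ ≤ c := by
      simp only [hF]
      calc ‖∑ j, ∑ i, v j z * (M j i * u i z)‖
          ≤ ∑ j, ‖∑ i, v j z * (M j i * u i z)‖ := norm_sum_le _ _
        _ ≤ ∑ j, ∑ i, ‖v j z‖ * (c * ‖u i z‖) := by
            refine Finset.sum_le_sum fun j _ => (norm_sum_le _ _).trans
              (Finset.sum_le_sum fun i _ => ?_)
            rw [norm_mul, norm_mul]
            exact mul_le_mul_of_nonneg_left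
              (mul_le_mul_of_nonneg_right (hc j i) (norm_nonneg _)) (norm_nonneg _)
        _ = (∑ j, ‖v j z‖) * (c * ∑ i, ‖u i z‖) := by
            simp only [← Finset.mul_sum]
            rw [← Finset.sum_mul]
        _ = c := by rw [h1, h2, mul_one, one_mul]
    simp only [hG]
    rw [norm_mul, hexp]
    calc ‖F z‖ * c⁻¹ ≤ c * c⁻¹ := by
          exact mul_le_mul_of_nonneg_right h3 (by positivity)
      _ = 1 := mul_inv_cancel₀ (ne_of_gt hc0)
  -- uniform bound on the strip
  have hK : ∀ z : ℂ, z.re ∈ Set.Ioo (0:ℝ) 1 →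
      ‖G z‖ ≤ ((d:ℝ)^2 * c) * Real.exp |Real.log c| := by
    intro z hz
    have hu1 : ∀ i, ‖u i z‖ ≤ 1 := by
      intro i
      rcases humod i z with h | ⟨_, h⟩
      · rw [h]
        exact Real.rpow_le_one (norm_nonneg _) (hle1 a ha i)
          (mul_nonneg (by positivity) (by linarith [hz.1]))
      · rw [h]; simp
    have hv1 : ∀ j, ‖v j z‖ ≤ 1 := by
      intro j
      rcases hvmod j z with h | ⟨_, h⟩
      · rw [h]
        exact Real.rpow_le_one (norm_nonneg _) (hle1 g hg j)
          (mul_nonneg (by positivity) (by linarith [hz.1]))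
      · rw [h]; simp
    have h3 : ‖F z‖ ≤ (d:ℝ)^2 * c := by
      simp only [hF]
      calc ‖∑ j, ∑ i, v j z * (M j i * u i z)‖
          ≤ ∑ j, ∑ i, ‖v j z * (M j i * u i z)‖ :=
            (norm_sum_le _ _).trans (Finset.sum_le_sum fun j _ => norm_sum_le _ _)
        _ ≤ ∑ j : Fin d, ∑ i : Fin d, c := by
            refine Finset.sum_le_sum fun j _ => Finset.sum_le_sum fun i _ => ?_
            rw [norm_mul, norm_mul]
            have h10 : ‖v j z‖ * (‖M j i‖ * ‖u i z‖) ≤ 1 * (c * 1) := by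
              refine mul_le_mul (hv1 j) ?_ (by positivity) one_pos.le
              exact mul_le_mul (hc j i) (hu1 i) (norm_nonneg _) hc0.le
            linarith
        _ = (d:ℝ)^2 * c := by
            simp only [Finset.sum_const, Finset.card_univ, Fintype.card_fin, nsmul_eq_mul]
            ring
    have hexp : ‖Complex.exp (((- Real.log c : ℝ) : ℂ) * z)‖ ≤ Real.exp |Real.log c| := by
      rw [Complex.norm_exp, Complex.re_ofReal_mul]
      apply Real.exp_le_exp.mpr
      have h6 : |(-Real.log c) * z.re| ≤ |Real.log c| := by
        rw [abs_mul, abs_neg]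
        have : |z.re| ≤ 1 := by
          rw [abs_le]
          exact ⟨by linarith [hz.1], by linarith [hz.2]⟩
        nlinarith [abs_nonneg (Real.log c)]
      linarith [le_abs_self ((-Real.log c) * z.re)]
    simp only [hG]
    rw [norm_mul]
    have h7 : (0:ℝ) ≤ (d:ℝ)^2 * c := by positivity
    have h8 : (0:ℝ) ≤ ‖F z‖ := norm_nonneg _
    nlinarith [norm_nonneg (Complex.exp (((- Real.log c : ℝ) : ℂ) * z)),
      Real.exp_pos |Real.log c|]
  -- Phragmén–Lindelöf
  have hPL : ‖G (t:ℂ)‖ ≤ 1 := by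
    apply PhragmenLindelof.vertical_strip (a := (0:ℝ)) (b := 1)
      (hGd.diffContOnCl)
      ?_ hB0 hB1 (by rw [Complex.ofReal_re]; exact le_of_lt ht0)
      (by rw [Complex.ofReal_re]; exact le_of_lt ht1)
    refine ⟨1, by rw [sub_zero]; linarith [Real.pi_gt_three], 0, ?_⟩
    rw [Asymptotics.isBigO_iff]
    refine ⟨((d:ℝ)^2 * c) * Real.exp |Real.log c|, ?_⟩
    rw [Filter.eventually_inf_principal]
    refine Filter.Eventually.of_forall fun z hz => ?_
    simp only [zero_mul, Real.exp_zero, norm_one, mul_one]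
    exact hK z hz
  -- value at t
  have hE1 : E (t:ℂ) = 1 := by
    simp only [hE]
    rw [show ((1:ℂ) + (t:ℂ)) = (((1+t : ℝ)):ℂ) by push_cast; ring,
      ← Complex.ofReal_mul, inv_mul_cancel₀ (ne_of_gt ht0'), Complex.ofReal_one]
  have hut : ∀ i, u i (t:ℂ) = a i := by
    intro i
    by_cases h : a i = 0
    · simp [hu, h]
    · simp only [hu, h, if_false, hE1, Complex.cpow_one]
      have h' : (‖a i‖ : ℂ) ≠ 0 := Complex.ofReal_ne_zero.mpr (norm_ne_zero_iff.mpr h)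
      rw [mul_comm, mul_assoc, inv_mul_cancel₀ h', mul_one]
  have hvt : ∀ j, v j (t:ℂ) = g j := by
    intro j
    by_cases h : g j = 0
    · simp [hv, h]
    · simp only [hv, h, if_false, hE1, Complex.cpow_one]
      have h' : (‖g j‖ : ℂ) ≠ 0 := Complex.ofReal_ne_zero.mpr (norm_ne_zero_iff.mpr h)
      rw [mul_comm, mul_assoc, inv_mul_cancel₀ h', mul_one]
  have hFt : F (t:ℂ) = ∑ j, g j * M.mulVec a j := by
    rw [hFz]
    simp only [hut, hvt]
  have hGt : ‖G (t:ℂ)‖ = ‖F (t:ℂ)‖ * Real.exp (-(Real.log c * t)) := by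
    simp only [hG]
    rw [norm_mul]
    congr 1
    rw [Complex.norm_exp, Complex.re_ofReal_mul,
      Complex.ofReal_re, neg_mul]
  have hmain : ‖F (t:ℂ)‖ ≤ Real.exp (Real.log c * t) := by
    have := hPL
    rw [hGt] at this
    have hpos : (0:ℝ) < Real.exp (-(Real.log c * t)) := Real.exp_pos _
    have h9 : ‖F (t:ℂ)‖ * Real.exp (-(Real.log c * t)) * Real.exp (Real.log c * t)
        ≤ 1 * Real.exp (Real.log c * t) :=
      mul_le_mul_of_nonneg_right this (le_of_lt (Real.exp_pos _))
    rwa [mul_assoc, ← Real.exp_add, neg_add_cancel, Real.exp_zero, mul_one, one_mul] at h9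
  rw [← hFt]
  calc ‖F (t:ℂ)‖ ≤ Real.exp (Real.log c * t) := hmain
    _ = c ^ t := (Real.rpow_def_of_pos hc0 t).symm


lemma rt_norm {d : ℕ} {M : Matrix (Fin d) (Fin d) ℂ}
    (hM2 : ∀ u : Fin d → ℂ, ∑ j, ‖M.mulVec u j‖ ^ 2 = ∑ i, ‖u i‖ ^ 2)
    {c : ℝ} (hc0 : 0 < c) (hc : ∀ i j, ‖M i j‖ ≤ c)
    {t : ℝ} (ht0 : 0 < t) (ht1 : t < 1)
    (α : Fin d → ℂ) (hα : ∑ i, ‖α i‖ ^ (2 / (1 + t)) = 1) :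
    (∑ j, ‖M.mulVec α j‖ ^ (2 / (1 - t))) ^ ((1 - t) / 2) ≤ c ^ t := by
  classical
  have ht0' : (0:ℝ) < 1 + t := by linarith
  have ht1' : (0:ℝ) < 1 - t := by linarith
  set q : ℝ := 2 / (1 - t) with hqdef
  set p : ℝ := 2 / (1 + t) with hpdef
  have hq0 : 0 < q := by positivity
  have hq2 : 2 < q := by
    rw [hqdef, lt_div_iff₀ ht1']; nlinarith
  have hqp : (q - 1) * p = q := by
    rw [hqdef, hpdef]; field_simp; ring
  set β : Fin d → ℂ := M.mulVec α with hβdef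
  by_cases hb0 : ∀ j, β j = 0
  · have hz : ∑ j, ‖β j‖ ^ q = 0 := by
      refine Finset.sum_eq_zero fun j _ => ?_
      rw [hb0 j, norm_zero, Real.zero_rpow (ne_of_gt hq0)]
    rw [hz, Real.zero_rpow (by positivity : (1 - t)/2 ≠ 0)]
    exact Real.rpow_nonneg hc0.le t
  · push_neg at hb0
    obtain ⟨j₀, hj₀⟩ := hb0
    set Sq : ℝ := ∑ j, ‖β j‖ ^ q with hSqdef
    have hSq0 : 0 < Sq := by
      refine Finset.sum_pos' (fun j _ => Real.rpow_nonneg (norm_nonneg _) _) ?_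
      exact ⟨j₀, Finset.mem_univ _,
        Real.rpow_pos_of_pos (norm_pos_iff.mpr hj₀) _⟩
    set Nq : ℝ := Sq ^ ((1 - t) / 2) with hNqdef
    have hNq0 : 0 < Nq := Real.rpow_pos_of_pos hSq0 _
    have hNqq : Nq ^ q = Sq := by
      rw [hNqdef, ← Real.rpow_mul hSq0.le]
      rw [show (1 - t) / 2 * q = 1 by rw [hqdef]; field_simp]
      exact Real.rpow_one Sq
    set γ : Fin d → ℂ := fun j =>
      (starRingEnd ℂ) (β j) * ((‖β j‖ ^ (q - 2) / Nq ^ (q - 1) : ℝ) : ℂ) with hγdef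
    have hγnorm : ∀ j, ‖γ j‖ = ‖β j‖ ^ (q - 1) / Nq ^ (q - 1) := by
      intro j
      rw [hγdef]
      by_cases h : β j = 0
      · simp [h, Real.zero_rpow (by linarith : q - 1 ≠ 0),
          Real.zero_rpow (by linarith : q - 2 ≠ 0)]
      · have hb : (0:ℝ) < ‖β j‖ := norm_pos_iff.mpr h
        rw [norm_mul, RCLike.norm_conj, Complex.norm_real, Real.norm_eq_abs,
          abs_of_nonneg (div_nonneg (Real.rpow_nonneg (norm_nonneg _) _)
            (Real.rpow_nonneg hNq0.le _)), ← mul_div_assoc]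
        congr 1
        rw [show ‖β j‖ * ‖β j‖ ^ (q - 2) = ‖β j‖ ^ (1:ℝ) * ‖β j‖ ^ (q - 2) by
          rw [Real.rpow_one], ← Real.rpow_add hb]
        ring_nf
    have hγp : ∑ j, ‖γ j‖ ^ (2 / (1 + t)) = 1 := by
      have hterm : ∀ j, ‖γ j‖ ^ p = ‖β j‖ ^ q / Sq := by
        intro j
        rw [hγnorm j, Real.div_rpow (Real.rpow_nonneg (norm_nonneg _) _)
          (Real.rpow_nonneg hNq0.le _), ← Real.rpow_mul (norm_nonneg _),
          ← Real.rpow_mul hNq0.le, hqp, hNqq]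
      rw [← hpdef, Finset.sum_congr rfl fun j _ => hterm j, ← Finset.sum_div, ← hSqdef,
        div_self (ne_of_gt hSq0)]
    have hNqq1 : Nq ^ (q - 1) * Nq = Sq := by
      rw [show Nq ^ (q - 1) * Nq = Nq ^ (q - 1) * Nq ^ (1:ℝ) by rw [Real.rpow_one],
        ← Real.rpow_add hNq0, sub_add_cancel, hNqq]
    have hsum : ∑ j, γ j * β j = ((Nq : ℝ) : ℂ) := by
      have hterm : ∀ j, γ j * β j = ((‖β j‖ ^ q / Nq ^ (q - 1) : ℝ) : ℂ) := by
        intro j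
        by_cases h : β j = 0
        · simp [hγdef, h, Real.zero_rpow (ne_of_gt hq0)]
        · have hb : (0:ℝ) < ‖β j‖ := norm_pos_iff.mpr h
          rw [hγdef]
          rw [show (starRingEnd ℂ) (β j) * ((‖β j‖ ^ (q - 2) / Nq ^ (q - 1) : ℝ) : ℂ) * β j
            = β j * (starRingEnd ℂ) (β j) * ((‖β j‖ ^ (q - 2) / Nq ^ (q - 1) : ℝ) : ℂ) by ring,
            Complex.mul_conj, Complex.normSq_eq_norm_sq,
            ← Complex.ofReal_mul]
          congr 1
          rw [← mul_div_assoc]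
          congr 1
          rw [← Real.rpow_natCast ‖β j‖ 2, ← Real.rpow_add hb]
          congr 1
          push_cast
          ring
      rw [Finset.sum_congr rfl fun j _ => hterm j, ← Complex.ofReal_sum,
        ← Finset.sum_div, ← hSqdef]
      congr 1
      rw [← hNqq1, mul_comm, mul_div_assoc, div_self (by positivity : Nq ^ (q-1) ≠ 0),
        mul_one]
    have hcore := core hM2 hc0 hc ht0 ht1 α γ hα hγp
    have hβγ : ∑ j, γ j * M.mulVec α j = ((Nq : ℝ) : ℂ) := by
      rw [← hsum]
    rw [hβγ] at hcore
    rw [Complex.norm_real, Real.norm_eq_abs, abs_of_pos hNq0] at hcore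
    exact hcore

lemma rt {d : ℕ} {M : Matrix (Fin d) (Fin d) ℂ}
    (hM2 : ∀ u : Fin d → ℂ, ∑ j, ‖M.mulVec u j‖ ^ 2 = ∑ i, ‖u i‖ ^ 2)
    {c : ℝ} (hc0 : 0 < c) (hc : ∀ i j, ‖M i j‖ ≤ c)
    {t : ℝ} (ht0 : 0 < t) (ht1 : t < 1) (α : Fin d → ℂ) :
    (∑ j, ‖M.mulVec α j‖ ^ (2 / (1 - t))) ^ ((1 - t) / 2) ≤
      c ^ t * (∑ i, ‖α i‖ ^ (2 / (1 + t))) ^ ((1 + t) / 2) := by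
  classical
  have ht0' : (0:ℝ) < 1 + t := by linarith
  have ht1' : (0:ℝ) < 1 - t := by linarith
  have hp0 : (0:ℝ) < 2 / (1 + t) := by positivity
  have hq0 : (0:ℝ) < 2 / (1 - t) := by positivity
  by_cases h0 : α = 0
  · subst h0
    rw [Matrix.mulVec_zero]
    simp only [Pi.zero_apply, norm_zero, Real.zero_rpow (ne_of_gt hq0),
      Real.zero_rpow (ne_of_gt hp0), Finset.sum_const, Finset.card_univ, smul_zero,
      Real.zero_rpow (by positivity : ((1:ℝ) - t)/2 ≠ 0),
      Real.zero_rpow (by positivity : ((1:ℝ) + t)/2 ≠ 0), mul_zero, le_refl]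
  · have hex : ∃ i, α i ≠ 0 := by
      by_contra hco
      push_neg at hco
      exact h0 (funext hco)
    obtain ⟨i₀, hi₀⟩ := hex
    set Sp : ℝ := ∑ i, ‖α i‖ ^ (2 / (1 + t)) with hSpdef
    have hSp0 : 0 < Sp := by
      refine Finset.sum_pos' (fun i _ => Real.rpow_nonneg (norm_nonneg _) _) ?_
      exact ⟨i₀, Finset.mem_univ _, Real.rpow_pos_of_pos (norm_pos_iff.mpr hi₀) _⟩
    set A : ℝ := Sp ^ ((1 + t) / 2) with hAdef
    have hA0 : 0 < A := Real.rpow_pos_of_pos hSp0 _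
    have hAp : A ^ (2 / (1 + t)) = Sp := by
      rw [hAdef, ← Real.rpow_mul hSp0.le,
        show (1 + t) / 2 * (2 / (1 + t)) = 1 by field_simp, Real.rpow_one]
    set α' : Fin d → ℂ := fun i => ((A⁻¹ : ℝ) : ℂ) * α i with hα'def
    have hα'norm : ∀ i, ‖α' i‖ = A⁻¹ * ‖α i‖ := by
      intro i
      rw [hα'def]
      rw [norm_mul, Complex.norm_real, Real.norm_eq_abs, abs_of_pos (by positivity)]
    have hα'p : ∑ i, ‖α' i‖ ^ (2 / (1 + t)) = 1 := by
      have : ∀ i, ‖α' i‖ ^ (2 / (1 + t)) = (A⁻¹) ^ (2/(1+t)) * ‖α i‖ ^ (2/(1+t)) := by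
        intro i
        rw [hα'norm i, Real.mul_rpow (by positivity) (norm_nonneg _)]
      rw [Finset.sum_congr rfl fun i _ => this i, ← Finset.mul_sum, ← hSpdef,
        Real.inv_rpow hA0.le, hAp, inv_mul_cancel₀ (ne_of_gt hSp0)]
    have hβ' : ∀ j, M.mulVec α' j = ((A⁻¹ : ℝ) : ℂ) * M.mulVec α j := by
      intro j
      have : α' = ((A⁻¹ : ℝ) : ℂ) • α := by
        funext i
        simp [hα'def]
      rw [this, Matrix.mulVec_smul]
      simp
    have hrt := rt_norm hM2 hc0 hc ht0 ht1 α' hα'p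
    have hLHS : (∑ j, ‖M.mulVec α' j‖ ^ (2 / (1 - t))) ^ ((1 - t) / 2)
        = A⁻¹ * (∑ j, ‖M.mulVec α j‖ ^ (2 / (1 - t))) ^ ((1 - t) / 2) := by
      have h1 : ∀ j, ‖M.mulVec α' j‖ ^ (2 / (1 - t))
          = (A⁻¹) ^ (2/(1-t)) * ‖M.mulVec α j‖ ^ (2/(1-t)) := by
        intro j
        rw [hβ' j, norm_mul, Complex.norm_real, Real.norm_eq_abs,
          abs_of_pos (by positivity), Real.mul_rpow (by positivity) (norm_nonneg _)]
      rw [Finset.sum_congr rfl fun j _ => h1 j, ← Finset.mul_sum,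
        Real.mul_rpow (by positivity)
          (Finset.sum_nonneg fun j _ => Real.rpow_nonneg (norm_nonneg _) _),
        ← Real.rpow_mul (by positivity : (0:ℝ) ≤ A⁻¹),
        show 2 / (1 - t) * ((1 - t) / 2) = 1 by field_simp, Real.rpow_one]
    rw [hLHS] at hrt
    calc (∑ j, ‖M.mulVec α j‖ ^ (2 / (1 - t))) ^ ((1 - t) / 2)
        = A * (A⁻¹ * (∑ j, ‖M.mulVec α j‖ ^ (2 / (1 - t))) ^ ((1 - t) / 2)) := by
          rw [← mul_assoc, mul_inv_cancel₀ (ne_of_gt hA0), one_mul]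
      _ ≤ A * (c ^ t) := mul_le_mul_of_nonneg_left hrt hA0.le
      _ = c ^ t * Sp ^ ((1 + t) / 2) := by rw [hAdef]; ring

lemma deriv_p (x : ℝ) (hx : 0 ≤ x) :
    HasDerivAt (fun s : ℝ => x ^ (1 + s)⁻¹) (Real.negMulLog x) 0 := by
  rcases eq_or_lt_of_le hx with h | h
  · subst h
    have hev : (fun s : ℝ => (0:ℝ) ^ (1 + s)⁻¹) =ᶠ[nhds (0:ℝ)] fun _ => 0 := by
      have hmem : Set.Ioo (-(1:ℝ)/2) (1/2) ∈ nhds (0:ℝ) :=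
        Ioo_mem_nhds (by norm_num) (by norm_num)
      refine Filter.eventuallyEq_of_mem hmem fun s hs => ?_
      rw [Real.zero_rpow (inv_ne_zero (by rcases hs with ⟨h1, h2⟩; intro hcon; nlinarith))]
    have h0 : HasDerivAt (fun _ : ℝ => (0:ℝ)) 0 0 := hasDerivAt_const _ _
    have h2 := h0.congr_of_eventuallyEq hev
    rw [Real.negMulLog_zero]
    exact h2
  · have hinv : HasDerivAt (fun s : ℝ => (1 + s)⁻¹) (-1) 0 := by
      have h1 : HasDerivAt (fun s : ℝ => 1 + s) 1 0 := by
        simpa using (hasDerivAt_id (0:ℝ)).const_add 1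
      have h2 := h1.inv (by norm_num)
      norm_num at h2
      exact h2
    have h3 := (Real.hasStrictDerivAt_const_rpow h ((1 + (0:ℝ))⁻¹)).hasDerivAt.comp 0 hinv
    have he : ((1:ℝ) + 0)⁻¹ = 1 := by norm_num
    rw [he, Real.rpow_one] at h3
    exact h3.congr_deriv (by rw [Real.negMulLog]; ring)

lemma deriv_q (x : ℝ) (hx : 0 ≤ x) :
    HasDerivAt (fun s : ℝ => x ^ (1 - s)⁻¹) (-Real.negMulLog x) 0 := by
  rcases eq_or_lt_of_le hx with h | h
  · subst h
    have hev : (fun s : ℝ => (0:ℝ) ^ (1 - s)⁻¹) =ᶠ[nhds (0:ℝ)] fun _ => 0 := by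
      have hmem : Set.Ioo (-(1:ℝ)/2) (1/2) ∈ nhds (0:ℝ) :=
        Ioo_mem_nhds (by norm_num) (by norm_num)
      refine Filter.eventuallyEq_of_mem hmem fun s hs => ?_
      rw [Real.zero_rpow (inv_ne_zero (by rcases hs with ⟨h1, h2⟩; intro hcon; nlinarith))]
    have h0 : HasDerivAt (fun _ : ℝ => (0:ℝ)) 0 0 := hasDerivAt_const _ _
    have h2 := h0.congr_of_eventuallyEq hev
    rw [Real.negMulLog_zero, neg_zero]
    exact h2
  · have hinv : HasDerivAt (fun s : ℝ => (1 - s)⁻¹) 1 0 := by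
      have h1 : HasDerivAt (fun s : ℝ => 1 - s) (-1) 0 := by
        simpa using (hasDerivAt_id (0:ℝ)).const_sub 1
      have h2 := h1.inv (by norm_num)
      norm_num at h2
      exact h2
    have h3 := (Real.hasStrictDerivAt_const_rpow h ((1 - (0:ℝ))⁻¹)).hasDerivAt.comp 0 hinv
    have he : ((1:ℝ) - 0)⁻¹ = 1 := by norm_num
    rw [he, Real.rpow_one] at h3
    exact h3.congr_deriv (by rw [Real.negMulLog]; ring)

lemma key {d : ℕ} {M : Matrix (Fin d) (Fin d) ℂ}
    (hM2 : ∀ u : Fin d → ℂ, ∑ j, ‖M.mulVec u j‖ ^ 2 = ∑ i, ‖u i‖ ^ 2)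
    {c : ℝ} (hc0 : 0 < c) (hc : ∀ i j, ‖M i j‖ ≤ c)
    (α : Fin d → ℂ) (hα : ∑ i, ‖α i‖ ^ 2 = 1) :
    -(2 * Real.log c) ≤ ∑ i, Real.negMulLog (‖α i‖ ^ 2)
      + ∑ j, Real.negMulLog (‖M.mulVec α j‖ ^ 2) := by
  classical
  set pf : Fin d → ℝ := fun i => ‖α i‖ ^ 2 with hpf
  set qf : Fin d → ℝ := fun j => ‖M.mulVec α j‖ ^ 2 with hqf
  have hpf0 : ∀ i, 0 ≤ pf i := fun i => sq_nonneg _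
  have hqf0 : ∀ j, 0 ≤ qf j := fun j => sq_nonneg _
  have hps : ∑ i, pf i = 1 := hα
  have hqs : ∑ j, qf j = 1 := (hM2 α).trans hα
  have hpex : ∃ i, 0 < pf i := by
    by_contra hcon
    push_neg at hcon
    have : ∑ i, pf i = 0 := le_antisymm
      (Finset.sum_nonpos fun i _ => hcon i) (Finset.sum_nonneg fun i _ => hpf0 i)
    rw [hps] at this
    norm_num at this
  have hqex : ∃ j, 0 < qf j := by
    by_contra hcon
    push_neg at hcon
    have : ∑ j, qf j = 0 := le_antisymm
      (Finset.sum_nonpos fun j _ => hcon j) (Finset.sum_nonneg fun j _ => hqf0 j)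
    rw [hqs] at this
    norm_num at this
  set Sp : ℝ → ℝ := fun s => ∑ i, pf i ^ (1 + s)⁻¹ with hSpdef
  set Sq : ℝ → ℝ := fun s => ∑ j, qf j ^ (1 - s)⁻¹ with hSqdef
  have hSppos : ∀ s : ℝ, 0 < Sp s := by
    intro s
    obtain ⟨i₀, hi₀⟩ := hpex
    exact Finset.sum_pos' (fun i _ => Real.rpow_nonneg (hpf0 i) _)
      ⟨i₀, Finset.mem_univ _, Real.rpow_pos_of_pos hi₀ _⟩
  have hSqpos : ∀ s : ℝ, 0 < Sq s := by
    intro s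
    obtain ⟨j₀, hj₀⟩ := hqex
    exact Finset.sum_pos' (fun j _ => Real.rpow_nonneg (hqf0 j) _)
      ⟨j₀, Finset.mem_univ _, Real.rpow_pos_of_pos hj₀ _⟩
  have hSp0 : Sp 0 = 1 := by
    simp only [hSpdef]
    rw [show ((1:ℝ) + 0)⁻¹ = 1 by norm_num]
    simp only [Real.rpow_one]
    exact hps
  have hSq0 : Sq 0 = 1 := by
    simp only [hSqdef]
    rw [show ((1:ℝ) - 0)⁻¹ = 1 by norm_num]
    simp only [Real.rpow_one]
    exact hqs
  set Φ : ℝ → ℝ := fun s => s * Real.log c + ((1 + s)/2) * Real.log (Sp s)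
      - ((1 - s)/2) * Real.log (Sq s) with hΦdef
  have hΦ0 : Φ 0 = 0 := by
    simp [hΦdef, hSp0, hSq0]
  -- nonnegativity of Φ on (0,1) from the interpolation inequality
  have hA : ∀ s : ℝ, 0 < s → s < 1 → 0 ≤ Φ s := by
    intro s hs0 hs1
    have h1 := rt hM2 hc0 hc hs0 hs1 α
    have hconv1 : ∀ i, ‖α i‖ ^ (2 / (1 + s)) = pf i ^ (1 + s)⁻¹ := by
      intro i
      simp only [hpf]
      rw [← Real.rpow_natCast ‖α i‖ 2, ← Real.rpow_mul (norm_nonneg _)]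
      congr 1
    have hconv2 : ∀ j, ‖M.mulVec α j‖ ^ (2 / (1 - s)) = qf j ^ (1 - s)⁻¹ := by
      intro j
      simp only [hqf]
      rw [← Real.rpow_natCast ‖M.mulVec α j‖ 2, ← Real.rpow_mul (norm_nonneg _)]
      congr 1
    rw [Finset.sum_congr rfl fun j _ => hconv2 j,
      Finset.sum_congr rfl fun i _ => hconv1 i] at h1
    have h2 : (Sq s) ^ ((1 - s)/2) ≤ c ^ s * (Sp s) ^ ((1 + s)/2) := h1
    have hLpos : 0 < (Sq s) ^ ((1 - s)/2) := Real.rpow_pos_of_pos (hSqpos s) _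
    have h3 := Real.log_le_log hLpos h2
    rw [Real.log_rpow (hSqpos s), Real.log_mul (ne_of_gt (Real.rpow_pos_of_pos hc0 s))
        (ne_of_gt (Real.rpow_pos_of_pos (hSppos s) _)),
      Real.log_rpow (hSppos s), Real.log_rpow hc0] at h3
    simp only [hΦdef]
    linarith
  set Hp : ℝ := ∑ i, Real.negMulLog (pf i) with hHp
  set Hq : ℝ := ∑ j, Real.negMulLog (qf j) with hHq
  have hSp' : HasDerivAt Sp Hp 0 := by
    simp only [hSpdef, hHp]
    exact HasDerivAt.fun_sum fun i _ => deriv_p (pf i) (hpf0 i)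
  have hSq' : HasDerivAt Sq (-Hq) 0 := by
    simp only [hSqdef, hHq]
    rw [← Finset.sum_neg_distrib]
    exact HasDerivAt.fun_sum fun j _ => deriv_q (qf j) (hqf0 j)
  have hΦ' : HasDerivAt Φ (Real.log c + Hp/2 + Hq/2) 0 := by
    have h1 : HasDerivAt (fun s : ℝ => s * Real.log c) (Real.log c) 0 := by
      simpa using (hasDerivAt_id (0:ℝ)).mul_const (Real.log c)
    have h2 : HasDerivAt (fun s : ℝ => Real.log (Sp s)) Hp 0 := by
      have := hSp'.log (by rw [hSp0]; norm_num)
      rwa [hSp0, div_one] at this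
    have h3 : HasDerivAt (fun s : ℝ => Real.log (Sq s)) (-Hq) 0 := by
      have := hSq'.log (by rw [hSq0]; norm_num)
      rwa [hSq0, div_one] at this
    have h4 : HasDerivAt (fun s : ℝ => (1 + s)/2) (1/2 : ℝ) 0 := by
      simpa using ((hasDerivAt_id (0:ℝ)).const_add 1).div_const 2
    have h5 : HasDerivAt (fun s : ℝ => (1 - s)/2) (-(1/2) : ℝ) 0 := by
      have := ((hasDerivAt_id (0:ℝ)).const_sub 1).div_const 2
      exact this.congr_deriv (by norm_num)
    have h6 := h4.mul h2
    have h7 := h5.mul h3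
    have h8 := (h1.add h6).sub h7
    have h9 : Real.log c + Hp/2 + Hq/2
        = Real.log c + (1/2 * Real.log (Sp 0) + (1 + 0)/2 * Hp)
          - (-(1/2) * Real.log (Sq 0) + (1 - 0)/2 * -Hq) := by
      rw [hSp0, hSq0, Real.log_one]
      ring
    rw [hΦdef, h9]
    exact h8
  have hD : 0 ≤ Real.log c + Hp/2 + Hq/2 := by
    have hton := hasDerivAt_iff_tendsto_slope.mp hΦ'
    have hT : Filter.Tendsto (slope Φ 0) (nhdsWithin 0 (Set.Ioi 0))
        (nhds (Real.log c + Hp/2 + Hq/2)) :=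
      hton.mono_left (nhdsWithin_mono 0 (fun x hx => ne_of_gt hx))
    refine ge_of_tendsto hT ?_
    filter_upwards [Ioo_mem_nhdsGT_of_mem (Set.mem_Ico.mpr ⟨le_refl (0:ℝ), one_pos⟩)]
      with s hs
    rw [slope_def_field, hΦ0, sub_zero, sub_zero]
    exact div_nonneg (hA s hs.1 hs.2) (le_of_lt hs.1)
  linarith


lemma parseval {d : ℕ} (χ : OrthonormalBasis (Fin d) ℂ (EuclideanSpace ℂ (Fin d)))
    (x : EuclideanSpace ℂ (Fin d)) :
    ∑ i, ‖(⟪χ i, x⟫ : ℂ)‖ ^ 2 = ‖x‖ ^ 2 := by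
  have h : ∀ i, (⟪χ i, x⟫ : ℂ) = χ.repr x i := fun i => (χ.repr_apply_apply x i).symm
  rw [Finset.sum_congr rfl fun i _ => by rw [h i]]
  have h2 : ‖x‖ = Real.sqrt (∑ i, ‖χ.repr x i‖ ^ 2) := by
    rw [← LinearIsometryEquiv.norm_map χ.repr x]
    exact EuclideanSpace.norm_eq _
  rw [h2, Real.sq_sqrt (Finset.sum_nonneg fun i _ => sq_nonneg _)]

lemma act_inner {d : ℕ} {N : Matrix (Fin d) (Fin d) ℂ}
    (hN : N ∈ Matrix.unitaryGroup (Fin d) ℂ) (x y : EuclideanSpace ℂ (Fin d)) :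
    (⟪act N x, act N y⟫ : ℂ) = ⟪x, y⟫ := by
  have h := mulVec_inner hN (fun i => x i) (fun i => y i)
  simp only [PiLp.inner_apply, RCLike.inner_apply]
  simpa [dotProduct, Pi.star_apply, RCLike.star_def, mul_comm, act] using h

lemma act_normsq {d : ℕ} {N : Matrix (Fin d) (Fin d) ℂ}
    (hN : N ∈ Matrix.unitaryGroup (Fin d) ℂ) (x : EuclideanSpace ℂ (Fin d)) :
    ‖act N x‖ = ‖x‖ := by
  rw [EuclideanSpace.norm_eq, EuclideanSpace.norm_eq]
  congr 1
  exact mulVec_normsq hN (fun i => x i)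


end MU
end MUProofs

theorem stmt_0 {d : ℕ} (hd : 1 ≤ d)
    (V W : Matrix (Fin d) (Fin d) ℂ)
    (hV : V ∈ Matrix.unitaryGroup (Fin d) ℂ)
    (hW : W ∈ Matrix.unitaryGroup (Fin d) ℂ)
    (χ : OrthonormalBasis (Fin d) ℂ (EuclideanSpace ℂ (Fin d)))
    (ψ : EuclideanSpace ℂ (Fin d)) (hψ : ‖ψ‖ = 1) :
    tEnt χ V ψ + tEnt χ W ψ ≥
      - Real.log (⨆ i : Fin d, ⨆ j : Fin d, ‖⟪χ i, act (W * Vᴴ) (χ j)⟫‖ ^ 2) := by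
  classical
  set U : Matrix (Fin d) (Fin d) ℂ := W * Vᴴ with hU
  have hUu : U ∈ Matrix.unitaryGroup (Fin d) ℂ := by
    rw [hU]
    exact mul_mem hW (by rw [← Matrix.star_eq_conjTranspose]; exact Unitary.star_mem hV)
  set T : Matrix (Fin d) (Fin d) ℂ := Matrix.of (fun i j => (⟪χ i, act U (χ j)⟫ : ℂ)) with hT
  have hTapp : ∀ i j, T i j = (⟪χ i, act U (χ j)⟫ : ℂ) := fun i j => rfl
  -- T is unitary
  have hTu : T ∈ Matrix.unitaryGroup (Fin d) ℂ := by
    rw [Matrix.mem_unitaryGroup_iff']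
    ext i j
    rw [Matrix.mul_apply, Matrix.one_apply]
    have h1 : ∀ k, (star T) i k * T k j = (⟪act U (χ i), χ k⟫ : ℂ) * ⟪χ k, act U (χ j)⟫ := by
      intro k
      rw [Matrix.star_apply, hTapp, hTapp, RCLike.star_def, inner_conj_symm]
    rw [Finset.sum_congr rfl fun k _ => h1 k, OrthonormalBasis.sum_inner_mul_inner,
      MU.act_inner hUu, orthonormal_iff_ite.mp χ.orthonormal]
  -- the coefficient vector
  set α : Fin d → ℂ := fun j => (⟪χ j, act V ψ⟫ : ℂ) with hα
  have hαsum : ∑ i, ‖α i‖ ^ 2 = 1 := by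
    rw [hα]
    have := MU.parseval χ (act V ψ)
    rw [MU.act_normsq hV, hψ] at this
    rw [this]
    norm_num
  -- the second distribution comes from T
  have hWact : act W ψ = act U (act V ψ) := by
    simp only [act, Matrix.toEuclideanLin_apply]
    rw [Matrix.mulVec_mulVec]
    congr 1
    rw [hU, Matrix.mul_assoc]
    have hV1 : Vᴴ * V = 1 := by
      rw [← Matrix.star_eq_conjTranspose]
      exact hV.1
    rw [hV1, Matrix.mul_one]
  have hβ : ∀ i, (⟪χ i, act W ψ⟫ : ℂ) = T.mulVec α i := by
    intro i
    rw [hWact]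
    have hsum : ∑ j, α j • χ j = act V ψ := by
      have h1 : ∀ j, α j • χ j = χ.repr (act V ψ) j • χ j := by
        intro j
        simp only [hα]
        rw [χ.repr_apply_apply]
      rw [Finset.sum_congr rfl fun j _ => h1 j]
      exact χ.sum_repr _
    rw [← hsum]
    have : act U (∑ j, α j • χ j) = ∑ j, α j • act U (χ j) := by
      simp only [act]
      rw [map_sum]
      exact Finset.sum_congr rfl fun j _ => by rw [map_smul]
    rw [this, inner_sum]
    rw [Matrix.mulVec, dotProduct]
    refine Finset.sum_congr rfl fun j _ => ?_
    rw [inner_smul_right, hTapp, mul_comm]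
  -- the supremum
  set s : ℝ := ⨆ i : Fin d, ⨆ j : Fin d, ‖(⟪χ i, act U (χ j)⟫ : ℂ)‖ ^ 2 with hs
  have hble : ∀ i j, ‖T i j‖ ^ 2 ≤ s := by
    intro i j
    rw [hTapp]
    calc ‖(⟪χ i, act U (χ j)⟫ : ℂ)‖ ^ 2
        ≤ ⨆ j : Fin d, ‖(⟪χ i, act U (χ j)⟫ : ℂ)‖ ^ 2 :=
          le_ciSup (f := fun j : Fin d => ‖(⟪χ i, act U (χ j)⟫ : ℂ)‖ ^ 2)
            (Set.Finite.bddAbove (Set.finite_range _)) j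
      _ ≤ s := le_ciSup (f := fun i : Fin d => ⨆ j : Fin d, ‖(⟪χ i, act U (χ j)⟫ : ℂ)‖ ^ 2)
          (Set.Finite.bddAbove (Set.finite_range _)) i
  have hspos : 0 < s := by
    have hj0 : (⟨0, hd⟩ : Fin d) = ⟨0, hd⟩ := rfl
    set j0 : Fin d := ⟨0, hd⟩
    have hcol : ∑ i, ‖T i j0‖ ^ 2 = 1 := by
      have h1 : ∀ i, T i j0 = (⟪χ i, act U (χ j0)⟫ : ℂ) := fun i => hTapp i j0
      rw [Finset.sum_congr rfl fun i _ => by rw [h1 i]]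
      rw [MU.parseval χ (act U (χ j0)), MU.act_normsq hUu, χ.orthonormal.1 j0, one_pow]
    have hex : ∃ i, 0 < ‖T i j0‖ ^ 2 := by
      by_contra hcon
      push_neg at hcon
      have : ∑ i, ‖T i j0‖ ^ 2 = 0 := le_antisymm
        (Finset.sum_nonpos fun i _ => hcon i) (Finset.sum_nonneg fun i _ => sq_nonneg _)
      rw [hcol] at this
      norm_num at this
    obtain ⟨i0, hi0⟩ := hex
    exact lt_of_lt_of_le hi0 (hble i0 j0)
  set c : ℝ := Real.sqrt s with hc
  have hc0 : 0 < c := Real.sqrt_pos.mpr hspos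
  have hcb : ∀ i j, ‖T i j‖ ≤ c := by
    intro i j
    have := Real.sqrt_le_sqrt (hble i j)
    rwa [Real.sqrt_sq (norm_nonneg _)] at this
  have hlog : Real.log s = 2 * Real.log c := by
    rw [show s = c ^ 2 by rw [hc, Real.sq_sqrt hspos.le], Real.log_pow]
    norm_num
  have hkey := MU.key (MU.mulVec_normsq hTu) hc0 hcb α hαsum
  have hW2 : ∑ j, Real.negMulLog (‖T.mulVec α j‖ ^ 2)
      = ∑ j, Real.negMulLog (‖(⟪χ j, act W ψ⟫ : ℂ)‖ ^ 2) :=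
    Finset.sum_congr rfl fun j _ => by rw [hβ j]
  rw [ge_iff_le, hlog]
  calc -(2 * Real.log c)
      ≤ ∑ i, Real.negMulLog (‖α i‖ ^ 2) + ∑ j, Real.negMulLog (‖T.mulVec α j‖ ^ 2) := hkey
    _ = tEnt χ V ψ + tEnt χ W ψ := by
        rw [hW2]
        rfl

end
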